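/- Let V be the value process of the standard Dynkin game SDG(L, U, Z) with L = X ∧ Z, U = Y ∨ Z. Then for each t, V_t lies between the maximin and minimax of the general game GDG_t(X,Y,Z): ess inf over σ ∈ T_[t,T] of ess sup over τ ∈ T_[t,T] of E[R(τ,σ)|F_t] ≥ V_t ≥ ess sup over τ of ess inf over σ of E[R(τ,σ)|F_t]. Consequently, if GDG_t(X,Y,Z) has a value, that value equals V_t. -/

import Mathlib

open MeasureTheory Filter Set

/-- Payoff of the general Dynkin game. -/
noncomputable def payoffD {Ω : Type*} (X Y Z : ℕ → Ω → ℝ) (τ σ : Ω → ℕ) (ω : Ω) : ℝ :=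
  if τ ω < σ ω then X (τ ω) ω else if σ ω < τ ω then Y (σ ω) ω else Z (σ ω) ω

/-- `g` is the essential supremum of the family `f` (in the a.e. order). -/
def IsEssSupFam {Ω : Type*} [MeasurableSpace Ω] (μ : Measure Ω) {ι : Sort*}
    (f : ι → Ω → ℝ) (g : Ω → ℝ) : Prop :=
  (∀ i, f i ≤ᵐ[μ] g) ∧ ∀ h : Ω → ℝ, (∀ i, f i ≤ᵐ[μ] h) → g ≤ᵐ[μ] h

/-- `g` is the essential infimum of the family `f` (in the a.e. order). -/
def IsEssInfFam {Ω : Type*} [MeasurableSpace Ω] (μ : Measure Ω) {ι : Sort*}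
    (f : ι → Ω → ℝ) (g : Ω → ℝ) : Prop :=
  (∀ i, g ≤ᵐ[μ] f i) ∧ ∀ h : Ω → ℝ, (∀ i, h ≤ᵐ[μ] f i) → h ≤ᵐ[μ] g

section Stmt8Aux

variable {Ω : Type*} {m0 : MeasurableSpace Ω}

lemma stmt8_st_le {ℱ : Filtration ℕ m0} {ρ : Ω → ℕ}
    (hρ : IsStoppingTime ℱ (fun ω => (ρ ω : WithTop ℕ))) (n : ℕ) :
    MeasurableSet[ℱ n] {ω | ρ ω ≤ n} := by
  have h := hρ n
  simpa using h

lemma stmt8_st_eq {ℱ : Filtration ℕ m0} {ρ : Ω → ℕ}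
    (hρ : IsStoppingTime ℱ (fun ω => (ρ ω : WithTop ℕ))) (n : ℕ) :
    MeasurableSet[ℱ n] {ω | ρ ω = n} := by
  have h := hρ.measurableSet_eq n
  simpa using h

lemma stmt8_st_lt {ℱ : Filtration ℕ m0} {ρ : Ω → ℕ}
    (hρ : IsStoppingTime ℱ (fun ω => (ρ ω : WithTop ℕ))) (n : ℕ) :
    MeasurableSet[ℱ n] {ω | ρ ω < n} := by
  have h := hρ.measurableSet_lt n
  simpa using h

lemma stmt8_st_of {ℱ : Filtration ℕ m0} {ρ : Ω → ℕ}
    (h : ∀ n, MeasurableSet[ℱ n] {ω | ρ ω ≤ n}) :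
    IsStoppingTime ℱ (fun ω => (ρ ω : WithTop ℕ)) := fun n => by
  simpa using h n

lemma stmt8_st_min {ℱ : Filtration ℕ m0} {τ σ : Ω → ℕ}
    (hτ : IsStoppingTime ℱ (fun ω => (τ ω : WithTop ℕ)))
    (hσ : IsStoppingTime ℱ (fun ω => (σ ω : WithTop ℕ))) :
    IsStoppingTime ℱ (fun ω => ((min (τ ω) (σ ω) : ℕ) : WithTop ℕ)) := by
  refine stmt8_st_of fun n => ?_
  have : {ω | min (τ ω) (σ ω) ≤ n} = {ω | τ ω ≤ n} ∪ {ω | σ ω ≤ n} := by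
    ext ω; simp [min_le_iff]
  rw [this]
  exact (stmt8_st_le hτ n).union (stmt8_st_le hσ n)

lemma stmt8_measurable_eval {T : ℕ} {W : ℕ → Ω → ℝ} (hW : ∀ s, s ≤ T → Measurable (W s))
    {ρ : Ω → ℕ} (hρ : Measurable ρ) (hρT : ∀ ω, ρ ω ≤ T) :
    Measurable fun ω => W (ρ ω) ω := by
  have heq : (fun ω => W (ρ ω) ω) =
      fun ω => ∑ s ∈ Finset.range (T + 1), if ρ ω = s then W s ω else 0 := by
    funext ω
    rw [Finset.sum_ite_eq, if_pos (Finset.mem_range.2 (Nat.lt_succ_of_le (hρT ω)))]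
  rw [heq]
  refine Finset.measurable_sum _ fun s hs => Measurable.ite ?_
    (hW s (by simpa [Nat.lt_succ_iff] using hs)) measurable_const
  exact hρ (measurableSet_singleton s)

lemma stmt8_integrable_eval {μ : Measure Ω} {T : ℕ} {W : ℕ → Ω → ℝ}
    (hWi : ∀ s, s ≤ T → Integrable (W s) μ)
    {ρ : Ω → ℕ} (hm : AEStronglyMeasurable (fun ω => W (ρ ω) ω) μ) (hρT : ∀ ω, ρ ω ≤ T) :
    Integrable (fun ω => W (ρ ω) ω) μ := by
  refine Integrable.mono'
    (integrable_finset_sum (μ := μ) (Finset.range (T + 1))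
      (fun s hs => (hWi s (by simpa [Nat.lt_succ_iff] using hs)).abs))
    hm (ae_of_all μ fun ω => ?_)
  rw [Real.norm_eq_abs]
  exact Finset.single_le_sum (f := fun s => |W s ω|) (fun i _ => abs_nonneg _)
    (Finset.mem_range.2 (Nat.lt_succ_of_le (hρT ω)))

lemma stmt8_st_meas {ℱ : Filtration ℕ m0} {ρ : Ω → ℕ} (hρ : IsStoppingTime ℱ (fun ω => (ρ ω : WithTop ℕ))) :
    Measurable ρ := by
  refine measurable_to_countable' fun n => ?_
  exact ℱ.le n _ (stmt8_st_eq hρ n)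

/-- Conditional optional-sampling style inequality for a process that behaves like a
submartingale strictly before the stopping time `ρ`. -/
lemma stmt8_key {μ : Measure Ω} [IsProbabilityMeasure μ] {ℱ : Filtration ℕ m0} {T : ℕ}
    {W : ℕ → Ω → ℝ} (hWm : ∀ s, s ≤ T → StronglyMeasurable[ℱ s] (W s))
    (hWi : ∀ s, s ≤ T → Integrable (W s) μ)
    {t : ℕ} (ht : t ≤ T) {ρ : Ω → ℕ} (hρ : IsStoppingTime ℱ (fun ω => (ρ ω : WithTop ℕ)))
    (hρ1 : ∀ ω, t ≤ ρ ω) (hρ2 : ∀ ω, ρ ω ≤ T)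
    (hsub : ∀ s, t ≤ s → s < T → ∀ᵐ ω ∂μ, s < ρ ω → W s ω ≤ (μ[W (s + 1) | ℱ s]) ω) :
    W t ≤ᵐ[μ] μ[(fun ω => W (ρ ω) ω) | ℱ t] := by
  have hρmeas : Measurable ρ := stmt8_st_meas hρ
  have hWmeas : ∀ s, s ≤ T → Measurable (W s) :=
    fun s hs => ((hWm s hs).measurable).mono (ℱ.le s) le_rfl
  have main : ∀ n, t ≤ n → n ≤ T →
      W t ≤ᵐ[μ] μ[(fun ω => W (min n (ρ ω)) ω) | ℱ t] := by
    refine Nat.le_induction ?_ ?_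
    · intro _
      have hfun : (fun ω => W (min t (ρ ω)) ω) = W t := by
        funext ω; rw [min_eq_left (hρ1 ω)]
      rw [hfun, condExp_of_stronglyMeasurable (ℱ.le t) (hWm t ht) (hWi t ht)]
    · intro n hn ih hn1
      have hnT : n ≤ T := Nat.le_of_succ_le hn1
      have hnltT : n < T := hn1
      have ihn := ih hnT
      set A : Set Ω := {ω | n < ρ ω} with hA_def
      have hA : MeasurableSet[ℱ n] A := by
        have : A = {ω | ρ ω ≤ n}ᶜ := by ext ω; simp [hA_def, not_le]
        rw [this]; exact (stmt8_st_le hρ n).compl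
      set D : Ω → ℝ := fun ω => W (n + 1) ω - W n ω with hD_def
      have hD_int : Integrable D μ := (hWi (n + 1) hn1).sub (hWi n hnT)
      have hGn_meas : Measurable (fun ω => W (min n (ρ ω)) ω) :=
        stmt8_measurable_eval hWmeas (measurable_const.min hρmeas)
          (fun ω => le_trans (min_le_left _ _) hnT)
      have hGn_int : Integrable (fun ω => W (min n (ρ ω)) ω) μ :=
        stmt8_integrable_eval hWi hGn_meas.aestronglyMeasurable
          (fun ω => le_trans (min_le_left _ _) hnT)
      have hdecomp : (fun ω => W (min (n + 1) (ρ ω)) ω) =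
          (fun ω => W (min n (ρ ω)) ω) + A.indicator D := by
        funext ω
        by_cases h : n < ρ ω
        · have h1 : min (n + 1) (ρ ω) = n + 1 := min_eq_left h
          have h2 : min n (ρ ω) = n := min_eq_left h.le
          simp only [Pi.add_apply, h1, h2, Set.indicator_of_mem (show ω ∈ A from h), hD_def]
          ring
        · have hle : ρ ω ≤ n := not_lt.mp h
          have h1 : min (n + 1) (ρ ω) = ρ ω := min_eq_right (hle.trans n.le_succ)
          have h2 : min n (ρ ω) = ρ ω := min_eq_right hle
          simp only [Pi.add_apply, h1, h2, Set.indicator_of_notMem (show ω ∉ A from h)]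
          ring
      have hind_int : Integrable (A.indicator D) μ := hD_int.indicator (ℱ.le n _ hA)
      have e1 : μ[(fun ω => W (min (n + 1) (ρ ω)) ω) | ℱ t] =ᵐ[μ]
          μ[(fun ω => W (min n (ρ ω)) ω) | ℱ t] + μ[A.indicator D | ℱ t] := by
        rw [hdecomp]
        exact condExp_add hGn_int hind_int _
      have e2 : μ[A.indicator D | ℱ n] =ᵐ[μ]
          A.indicator (fun ω => (μ[W (n + 1) | ℱ n]) ω - W n ω) := by
        refine (condExp_indicator hD_int hA).trans ?_
        have h3 : μ[D | ℱ n] =ᵐ[μ] fun ω => (μ[W (n + 1) | ℱ n]) ω - W n ω := by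
          refine (condExp_sub (hWi (n + 1) hn1) (hWi n hnT) _).trans ?_
          rw [condExp_of_stronglyMeasurable (ℱ.le n) (hWm n hnT) (hWi n hnT)]
          exact Eventually.of_forall fun ω => rfl
        filter_upwards [h3] with ω hω
        by_cases hmem : ω ∈ A
        · simp only [Set.indicator_of_mem hmem, hω]
        · simp only [Set.indicator_of_notMem hmem]
      have e3 : (0 : Ω → ℝ) ≤ᵐ[μ] μ[A.indicator D | ℱ n] := by
        filter_upwards [e2, hsub n hn hnltT] with ω h1 h2
        rw [Pi.zero_apply, h1]
        by_cases hmem : ω ∈ A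
        · rw [Set.indicator_of_mem hmem]
          exact sub_nonneg.2 (h2 hmem)
        · rw [Set.indicator_of_notMem hmem]
      have e4 : (0 : Ω → ℝ) ≤ᵐ[μ] μ[A.indicator D | ℱ t] := by
        have etow : μ[μ[A.indicator D | ℱ n] | ℱ t] =ᵐ[μ] μ[A.indicator D | ℱ t] :=
          condExp_condExp_of_le (ℱ.mono hn) (ℱ.le n)
        exact (condExp_nonneg e3).trans etow.le
      filter_upwards [e1, e4, ihn] with ω h1 h4 hih
      rw [h1, Pi.add_apply]
      have h4' : (0 : ℝ) ≤ (μ[A.indicator D | ℱ t]) ω := h4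
      linarith
  have hfin := main T ht le_rfl
  have heq : (fun ω => W (min T (ρ ω)) ω) = fun ω => W (ρ ω) ω := by
    funext ω; rw [min_eq_right (hρ2 ω)]
  rwa [heq] at hfin

/-- Supermartingale version of `stmt8_key`. -/
lemma stmt8_key' {μ : Measure Ω} [IsProbabilityMeasure μ] {ℱ : Filtration ℕ m0} {T : ℕ}
    {W : ℕ → Ω → ℝ} (hWm : ∀ s, s ≤ T → StronglyMeasurable[ℱ s] (W s))
    (hWi : ∀ s, s ≤ T → Integrable (W s) μ)
    {t : ℕ} (ht : t ≤ T) {ρ : Ω → ℕ} (hρ : IsStoppingTime ℱ (fun ω => (ρ ω : WithTop ℕ)))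
    (hρ1 : ∀ ω, t ≤ ρ ω) (hρ2 : ∀ ω, ρ ω ≤ T)
    (hsup : ∀ s, t ≤ s → s < T → ∀ᵐ ω ∂μ, s < ρ ω → (μ[W (s + 1) | ℱ s]) ω ≤ W s ω) :
    μ[(fun ω => W (ρ ω) ω) | ℱ t] ≤ᵐ[μ] W t := by
  have hkey := stmt8_key (W := fun s => -W s) (fun s hs => (hWm s hs).neg)
    (fun s hs => (hWi s hs).neg) ht hρ hρ1 hρ2 ?_
  · have hneg : μ[(fun ω => -W (ρ ω) ω) | ℱ t] =ᵐ[μ] -μ[(fun ω => W (ρ ω) ω) | ℱ t] :=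
      condExp_neg _ _
    filter_upwards [hkey, hneg] with ω h1 h2
    have h1' : -W t ω ≤ (μ[(fun ω => -W (ρ ω) ω) | ℱ t]) ω := h1
    rw [h2, Pi.neg_apply] at h1'
    linarith
  · intro s hts hsT
    have hneg : μ[(-W (s + 1) : Ω → ℝ) | ℱ s] =ᵐ[μ] -μ[W (s + 1) | ℱ s] := condExp_neg _ _
    filter_upwards [hsup s hts hsT, hneg] with ω h1 h2 hlt
    have h2' : (μ[(-W (s + 1) : Ω → ℝ) | ℱ s]) ω = -(μ[W (s + 1) | ℱ s]) ω := by
      rw [h2, Pi.neg_apply]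
    have := h1 hlt
    show -W s ω ≤ (μ[(-W (s + 1) : Ω → ℝ) | ℱ s]) ω
    rw [h2']
    linarith

lemma stmt8_payoff_integrable {μ : Measure Ω} {T : ℕ} {X Y Z : ℕ → Ω → ℝ}
    (hX : ∀ s, s ≤ T → Measurable (X s)) (hY : ∀ s, s ≤ T → Measurable (Y s))
    (hZ : ∀ s, s ≤ T → Measurable (Z s))
    (hXi : ∀ s, Integrable (X s) μ) (hYi : ∀ s, Integrable (Y s) μ)
    (hZi : ∀ s, Integrable (Z s) μ)
    {τ σ : Ω → ℕ} (hτ : Measurable τ) (hσ : Measurable σ)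
    (hτT : ∀ ω, τ ω ≤ T) (hσT : ∀ ω, σ ω ≤ T) :
    Integrable (payoffD X Y Z τ σ) μ := by
  have hG : ∀ a, a ≤ T →
      Measurable (fun ω => if a < σ ω then X a ω
        else if σ ω < a then Y (σ ω) ω else Z (σ ω) ω) := by
    intro a ha
    have hH : Measurable (fun ω => if σ ω < a then Y (σ ω) ω else Z (σ ω) ω) := by
      have heq : (fun ω => if σ ω < a then Y (σ ω) ω else Z (σ ω) ω) =
          fun ω => (fun b (ω : Ω) => if b < a then Y b ω else Z b ω) (σ ω) ω := rfl
      rw [heq]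
      refine stmt8_measurable_eval (W := fun b (ω : Ω) => if b < a then Y b ω else Z b ω) (fun b hb => ?_) hσ hσT
      by_cases hba : b < a
      · simpa [hba] using hY b hb
      · simpa [hba] using hZ b hb
    refine Measurable.ite ?_ (hX a ha) hH
    exact hσ measurableSet_Ioi
  have hmeas : Measurable (payoffD X Y Z τ σ) := by
    have heq : payoffD X Y Z τ σ =
        fun ω => (fun a (ω : Ω) => if a < σ ω then X a ω
          else if σ ω < a then Y (σ ω) ω else Z (σ ω) ω) (τ ω) ω := rfl
    rw [heq]
    exact stmt8_measurable_eval (W := fun a (ω : Ω) => if a < σ ω then X a ω else if σ ω < a then Y (σ ω) ω else Z (σ ω) ω) hG hτ hτT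
  refine Integrable.mono'
    (g := fun ω => ∑ s ∈ Finset.range (T + 1), (|X s ω| + |Y s ω| + |Z s ω|))
    (integrable_finset_sum _ fun s _ => ((hXi s).abs.add (hYi s).abs).add (hZi s).abs)
    hmeas.aestronglyMeasurable (ae_of_all μ fun ω => ?_)
  rw [Real.norm_eq_abs]
  have hbound : ∀ s : ℕ, s ≤ T → |X s ω| + |Y s ω| + |Z s ω| ≤
      ∑ u ∈ Finset.range (T + 1), (|X u ω| + |Y u ω| + |Z u ω|) := fun s hs =>
    Finset.single_le_sum (f := fun u => |X u ω| + |Y u ω| + |Z u ω|)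
      (fun i _ => by positivity) (Finset.mem_range.2 (Nat.lt_succ_of_le hs))
  simp only [payoffD]
  split_ifs with h1 h2
  · have := hbound (τ ω) (hτT ω)
    have h3 := abs_nonneg (Y (τ ω) ω); have h4 := abs_nonneg (Z (τ ω) ω); linarith
  · have := hbound (σ ω) (hσT ω)
    have h3 := abs_nonneg (X (σ ω) ω); have h4 := abs_nonneg (Z (σ ω) ω); linarith
  · have := hbound (σ ω) (hσT ω)
    have h3 := abs_nonneg (X (σ ω) ω); have h4 := abs_nonneg (Y (σ ω) ω); linarith

lemma stmt8_sm_sup {Ω' : Type*} {m : MeasurableSpace Ω'} {f g : Ω' → ℝ}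
    (hf : StronglyMeasurable[m] f) (hg : StronglyMeasurable[m] g) :
    StronglyMeasurable[m] (f ⊔ g) := hf.sup hg

lemma stmt8_sm_inf {Ω' : Type*} {m : MeasurableSpace Ω'} {f g : Ω' → ℝ}
    (hf : StronglyMeasurable[m] f) (hg : StronglyMeasurable[m] g) :
    StronglyMeasurable[m] (f ⊓ g) := hf.inf hg

lemma stmt8_msle {Ω' : Type*} {m : MeasurableSpace Ω'} {f g : Ω' → ℝ}
    (hf : Measurable[m] f) (hg : Measurable[m] g) : MeasurableSet[m] {ω | f ω ≤ g ω} :=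
  measurableSet_le hf hg

lemma stmt8_partA {μ : Measure Ω} [IsProbabilityMeasure μ] {ℱ : Filtration ℕ m0} {T : ℕ}
    {X Y Z V : ℕ → Ω → ℝ}
    (hXa : Adapted ℱ X) (hYa : Adapted ℱ Y) (hZa : Adapted ℱ Z)
    (hXi : ∀ s, Integrable (X s) μ) (hYi : ∀ s, Integrable (Y s) μ)
    (hZi : ∀ s, Integrable (Z s) μ)
    (hVT : ∀ ω, V T ω = Z T ω)
    (hV : ∀ s, s < T → ∀ ω, V s ω =
      min (max (Y s ω) (Z s ω)) (max (min (X s ω) (Z s ω)) ((μ[V (s + 1) | ℱ s]) ω)))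
    (hVm : ∀ s, s ≤ T → StronglyMeasurable[ℱ s] (V s))
    (hVi : ∀ s, s ≤ T → Integrable (V s) μ)
    {t : ℕ} (ht : t ≤ T) {σ0 : Ω → ℕ} (hσst : IsStoppingTime ℱ (fun ω => (σ0 ω : WithTop ℕ)))
    (hσmem : ∀ ω, σ0 ω ∈ Set.Icc t T) :
    ∃ τ0 : Ω → ℕ, IsStoppingTime ℱ (fun ω => (τ0 ω : WithTop ℕ)) ∧ (∀ ω, τ0 ω ∈ Set.Icc t T) ∧
      V t ≤ᵐ[μ] μ[payoffD X Y Z τ0 σ0 | ℱ t] := by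
  classical
  set C : ℕ → Ω → Prop := fun s ω => t ≤ s ∧
    ((s < σ0 ω ∧ V s ω ≤ X s ω) ∨ (s = σ0 ω ∧ V s ω ≤ Z s ω) ∨ σ0 ω < s) with hC_def
  have hCT : ∀ ω, C T ω := by
    intro ω
    refine ⟨ht, ?_⟩
    rcases eq_or_lt_of_le (hσmem ω).2 with h | h
    · exact Or.inr (Or.inl ⟨h.symm, (hVT ω).le⟩)
    · exact Or.inr (Or.inr h)
  have hex : ∀ ω, ∃ s, C s ω := fun ω => ⟨T, hCT ω⟩
  set τ0 : Ω → ℕ := fun ω => Nat.find (hex ω) with hτ0_def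
  have hτspec : ∀ ω, C (τ0 ω) ω := fun ω => Nat.find_spec (hex ω)
  have hτmin : ∀ ω s, s < τ0 ω → ¬ C s ω := fun ω s hs => Nat.find_min (hex ω) hs
  have hτt : ∀ ω, t ≤ τ0 ω := fun ω => (hτspec ω).1
  have hτT : ∀ ω, τ0 ω ≤ T := fun ω => Nat.find_le (hCT ω)
  have hCmeas : ∀ s, s ≤ T → MeasurableSet[ℱ s] {ω | C s ω} := by
    intro s hsT
    by_cases hts : t ≤ s
    · have hset : {ω | C s ω} =
          (({ω | σ0 ω ≤ s}ᶜ ∩ {ω | V s ω ≤ X s ω}) ∪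
            ({ω | σ0 ω = s} ∩ {ω | V s ω ≤ Z s ω})) ∪ {ω | σ0 ω < s} := by
        ext ω
        simp only [hC_def, Set.mem_setOf_eq, Set.mem_union, Set.mem_inter_iff,
          Set.mem_compl_iff, not_le]
        constructor
        · rintro ⟨-, (⟨h1, h2⟩ | ⟨h1, h2⟩ | h1)⟩
          · exact Or.inl (Or.inl ⟨h1, h2⟩)
          · exact Or.inl (Or.inr ⟨h1.symm, h1 ▸ h2⟩)
          · exact Or.inr h1
        · rintro ((⟨h1, h2⟩ | ⟨h1, h2⟩) | h1)
          · exact ⟨hts, Or.inl ⟨h1, h2⟩⟩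
          · exact ⟨hts, Or.inr (Or.inl ⟨h1.symm, h1 ▸ h2⟩)⟩
          · exact ⟨hts, Or.inr (Or.inr h1)⟩
      rw [hset]
      refine MeasurableSet.union (MeasurableSet.union ?_ ?_) (stmt8_st_lt hσst s)
      · exact (stmt8_st_le hσst s).compl.inter
          (stmt8_msle ((hVm s hsT).measurable) (hXa s))
      · exact (stmt8_st_eq hσst s).inter
          (stmt8_msle ((hVm s hsT).measurable) (hZa s))
    · have : {ω | C s ω} = ∅ := by
        ext ω; simp [hC_def, hts]
      rw [this]; exact @MeasurableSet.empty _ (ℱ s)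
  have hτst : IsStoppingTime ℱ (fun ω => (τ0 ω : WithTop ℕ)) := by
    refine stmt8_st_of fun n => ?_
    by_cases hnT : n < T
    · have hset : {ω | τ0 ω ≤ n} = ⋃ s ∈ Finset.range (n + 1), {ω | C s ω} := by
        ext ω
        simp only [Set.mem_setOf_eq, Set.mem_iUnion, Finset.mem_range, Nat.lt_succ_iff,
          exists_prop]
        constructor
        · intro h; exact ⟨τ0 ω, h, hτspec ω⟩
        · rintro ⟨s, hsn, hcs⟩; exact le_trans (Nat.find_le hcs) hsn
      rw [hset]
      refine Finset.measurableSet_biUnion _ fun s hs => ?_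
      have hsn : s ≤ n := Nat.lt_succ_iff.mp (Finset.mem_range.mp hs)
      exact ℱ.mono hsn _ (hCmeas s (by omega))
    · have : {ω | τ0 ω ≤ n} = Set.univ :=
        Set.eq_univ_of_forall fun ω => le_trans (hτT ω) (not_lt.mp hnT)
      rw [this]; exact @MeasurableSet.univ _ (ℱ n)
  have hρst : IsStoppingTime ℱ (fun ω => ((min (τ0 ω) (σ0 ω) : ℕ) : WithTop ℕ)) :=
    stmt8_st_min hτst hσst
  have hρt : ∀ ω, t ≤ min (τ0 ω) (σ0 ω) := fun ω => le_min (hτt ω) (hσmem ω).1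
  have hρT : ∀ ω, min (τ0 ω) (σ0 ω) ≤ T := fun ω => le_trans (min_le_left _ _) (hτT ω)
  have hsub : ∀ s, t ≤ s → s < T →
      ∀ᵐ ω ∂μ, s < min (τ0 ω) (σ0 ω) → V s ω ≤ (μ[V (s + 1) | ℱ s]) ω := by
    intro s hts hsT
    refine ae_of_all μ fun ω hlt => ?_
    have hsτ : s < τ0 ω := lt_of_lt_of_le hlt (min_le_left _ _)
    have hsσ : s < σ0 ω := lt_of_lt_of_le hlt (min_le_right _ _)
    have hnc := hτmin ω s hsτ
    have hXV : ¬ V s ω ≤ X s ω := fun hvx => hnc ⟨hts, Or.inl ⟨hsσ, hvx⟩⟩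
    by_contra hcon
    push_neg at hcon
    have h2 : V s ω ≤ max (min (X s ω) (Z s ω)) ((μ[V (s + 1) | ℱ s]) ω) :=
      (hV s hsT ω) ▸ min_le_right _ _
    rcases le_max_iff.mp h2 with h3 | h3
    · exact hXV (h3.trans (min_le_left _ _))
    · exact absurd h3 (not_le.mpr hcon)
  have hcmp : ∀ ω, V (min (τ0 ω) (σ0 ω)) ω ≤ payoffD X Y Z τ0 σ0 ω := by
    intro ω
    rcases lt_trichotomy (τ0 ω) (σ0 ω) with h | h | h
    · have hρ : min (τ0 ω) (σ0 ω) = τ0 ω := min_eq_left h.le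
      have hp : payoffD X Y Z τ0 σ0 ω = X (τ0 ω) ω := if_pos h
      rw [hρ, hp]
      rcases (hτspec ω).2 with ⟨-, hvx⟩ | ⟨h1, -⟩ | h1
      · exact hvx
      · exact absurd h1 h.ne
      · exact absurd h1 (lt_asymm h)
    · have hρ : min (τ0 ω) (σ0 ω) = σ0 ω := by rw [h, min_self]
      have hp : payoffD X Y Z τ0 σ0 ω = Z (σ0 ω) ω := by
        simp [payoffD, h]
      rw [hρ, hp]
      rcases (hτspec ω).2 with ⟨h1, -⟩ | ⟨h1, hvz⟩ | h1
      · exact absurd h1 (by omega)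
      · rw [← h]; exact h ▸ hvz
      · exact absurd h1 (by omega)
    · have hρ : min (τ0 ω) (σ0 ω) = σ0 ω := min_eq_right h.le
      have hp : payoffD X Y Z τ0 σ0 ω = Y (σ0 ω) ω := by
        simp only [payoffD, if_neg (lt_asymm h), if_pos h]
      rw [hρ, hp]
      have hσT' : σ0 ω < T := lt_of_lt_of_le h (hτT ω)
      have hnc := hτmin ω (σ0 ω) h
      have hZV : ¬ V (σ0 ω) ω ≤ Z (σ0 ω) ω := fun hvz =>
        hnc ⟨(hσmem ω).1, Or.inr (Or.inl ⟨rfl, hvz⟩)⟩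
      have h2 : V (σ0 ω) ω ≤ max (Y (σ0 ω) ω) (Z (σ0 ω) ω) :=
        (hV _ hσT' ω) ▸ min_le_left _ _
      rcases le_max_iff.mp h2 with h3 | h3
      · exact h3
      · exact absurd h3 hZV
  have hkey := stmt8_key hVm hVi ht hρst hρt hρT hsub
  have hmeasV : Measurable (fun ω => V (min (τ0 ω) (σ0 ω)) ω) :=
    stmt8_measurable_eval (fun s hs => ((hVm s hs).measurable).mono (ℱ.le s) le_rfl)
      ((stmt8_st_meas hτst).min (stmt8_st_meas hσst)) hρT
  have hintV : Integrable (fun ω => V (min (τ0 ω) (σ0 ω)) ω) μ :=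
    stmt8_integrable_eval hVi hmeasV.aestronglyMeasurable hρT
  have hintP : Integrable (payoffD X Y Z τ0 σ0) μ :=
    stmt8_payoff_integrable (fun s _ => (hXa s).mono (ℱ.le s) le_rfl)
      (fun s _ => (hYa s).mono (ℱ.le s) le_rfl)
      (fun s _ => (hZa s).mono (ℱ.le s) le_rfl)
      hXi hYi hZi (stmt8_st_meas hτst) (stmt8_st_meas hσst) hτT (fun ω => (hσmem ω).2)
  exact ⟨τ0, hτst, fun ω => ⟨hτt ω, hτT ω⟩,
    hkey.trans (condExp_mono hintV hintP (ae_of_all μ hcmp))⟩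

lemma stmt8_partB {μ : Measure Ω} [IsProbabilityMeasure μ] {ℱ : Filtration ℕ m0} {T : ℕ}
    {X Y Z V : ℕ → Ω → ℝ}
    (hXa : Adapted ℱ X) (hYa : Adapted ℱ Y) (hZa : Adapted ℱ Z)
    (hXi : ∀ s, Integrable (X s) μ) (hYi : ∀ s, Integrable (Y s) μ)
    (hZi : ∀ s, Integrable (Z s) μ)
    (hVT : ∀ ω, V T ω = Z T ω)
    (hV : ∀ s, s < T → ∀ ω, V s ω =
      min (max (Y s ω) (Z s ω)) (max (min (X s ω) (Z s ω)) ((μ[V (s + 1) | ℱ s]) ω)))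
    (hVm : ∀ s, s ≤ T → StronglyMeasurable[ℱ s] (V s))
    (hVi : ∀ s, s ≤ T → Integrable (V s) μ)
    {t : ℕ} (ht : t ≤ T) {τ1 : Ω → ℕ} (hτst : IsStoppingTime ℱ (fun ω => (τ1 ω : WithTop ℕ)))
    (hτmem : ∀ ω, τ1 ω ∈ Set.Icc t T) :
    ∃ σ1 : Ω → ℕ, IsStoppingTime ℱ (fun ω => (σ1 ω : WithTop ℕ)) ∧ (∀ ω, σ1 ω ∈ Set.Icc t T) ∧
      μ[payoffD X Y Z τ1 σ1 | ℱ t] ≤ᵐ[μ] V t := by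
  classical
  set C : ℕ → Ω → Prop := fun s ω => t ≤ s ∧
    ((s < τ1 ω ∧ Y s ω ≤ V s ω) ∨ (s = τ1 ω ∧ Z s ω ≤ V s ω) ∨ τ1 ω < s) with hC_def
  have hCT : ∀ ω, C T ω := by
    intro ω
    refine ⟨ht, ?_⟩
    rcases eq_or_lt_of_le (hτmem ω).2 with h | h
    · exact Or.inr (Or.inl ⟨h.symm, (hVT ω).ge⟩)
    · exact Or.inr (Or.inr h)
  have hex : ∀ ω, ∃ s, C s ω := fun ω => ⟨T, hCT ω⟩
  set σ1 : Ω → ℕ := fun ω => Nat.find (hex ω) with hσ1_def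
  have hσspec : ∀ ω, C (σ1 ω) ω := fun ω => Nat.find_spec (hex ω)
  have hσmin : ∀ ω s, s < σ1 ω → ¬ C s ω := fun ω s hs => Nat.find_min (hex ω) hs
  have hσt : ∀ ω, t ≤ σ1 ω := fun ω => (hσspec ω).1
  have hσT : ∀ ω, σ1 ω ≤ T := fun ω => Nat.find_le (hCT ω)
  have hCmeas : ∀ s, s ≤ T → MeasurableSet[ℱ s] {ω | C s ω} := by
    intro s hsT
    by_cases hts : t ≤ s
    · have hset : {ω | C s ω} =
          (({ω | τ1 ω ≤ s}ᶜ ∩ {ω | Y s ω ≤ V s ω}) ∪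
            ({ω | τ1 ω = s} ∩ {ω | Z s ω ≤ V s ω})) ∪ {ω | τ1 ω < s} := by
        ext ω
        simp only [hC_def, Set.mem_setOf_eq, Set.mem_union, Set.mem_inter_iff,
          Set.mem_compl_iff, not_le]
        constructor
        · rintro ⟨-, (⟨h1, h2⟩ | ⟨h1, h2⟩ | h1)⟩
          · exact Or.inl (Or.inl ⟨h1, h2⟩)
          · exact Or.inl (Or.inr ⟨h1.symm, h1 ▸ h2⟩)
          · exact Or.inr h1
        · rintro ((⟨h1, h2⟩ | ⟨h1, h2⟩) | h1)
          · exact ⟨hts, Or.inl ⟨h1, h2⟩⟩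
          · exact ⟨hts, Or.inr (Or.inl ⟨h1.symm, h1 ▸ h2⟩)⟩
          · exact ⟨hts, Or.inr (Or.inr h1)⟩
      rw [hset]
      refine MeasurableSet.union (MeasurableSet.union ?_ ?_) (stmt8_st_lt hτst s)
      · exact (stmt8_st_le hτst s).compl.inter
          (stmt8_msle (hYa s) ((hVm s hsT).measurable))
      · exact (stmt8_st_eq hτst s).inter
          (stmt8_msle (hZa s) ((hVm s hsT).measurable))
    · have : {ω | C s ω} = ∅ := by
        ext ω; simp [hC_def, hts]
      rw [this]; exact @MeasurableSet.empty _ (ℱ s)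
  have hσst : IsStoppingTime ℱ (fun ω => (σ1 ω : WithTop ℕ)) := by
    refine stmt8_st_of fun n => ?_
    by_cases hnT : n < T
    · have hset : {ω | σ1 ω ≤ n} = ⋃ s ∈ Finset.range (n + 1), {ω | C s ω} := by
        ext ω
        simp only [Set.mem_setOf_eq, Set.mem_iUnion, Finset.mem_range, Nat.lt_succ_iff,
          exists_prop]
        constructor
        · intro h; exact ⟨σ1 ω, h, hσspec ω⟩
        · rintro ⟨s, hsn, hcs⟩; exact le_trans (Nat.find_le hcs) hsn
      rw [hset]
      refine Finset.measurableSet_biUnion _ fun s hs => ?_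
      have hsn : s ≤ n := Nat.lt_succ_iff.mp (Finset.mem_range.mp hs)
      exact ℱ.mono hsn _ (hCmeas s (by omega))
    · have : {ω | σ1 ω ≤ n} = Set.univ :=
        Set.eq_univ_of_forall fun ω => le_trans (hσT ω) (not_lt.mp hnT)
      rw [this]; exact @MeasurableSet.univ _ (ℱ n)
  have hρst : IsStoppingTime ℱ (fun ω => ((min (σ1 ω) (τ1 ω) : ℕ) : WithTop ℕ)) :=
    stmt8_st_min hσst hτst
  have hρt : ∀ ω, t ≤ min (σ1 ω) (τ1 ω) := fun ω => le_min (hσt ω) (hτmem ω).1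
  have hρT : ∀ ω, min (σ1 ω) (τ1 ω) ≤ T := fun ω => le_trans (min_le_left _ _) (hσT ω)
  have hsup : ∀ s, t ≤ s → s < T →
      ∀ᵐ ω ∂μ, s < min (σ1 ω) (τ1 ω) → (μ[V (s + 1) | ℱ s]) ω ≤ V s ω := by
    intro s hts hsT
    refine ae_of_all μ fun ω hlt => ?_
    have hsσ : s < σ1 ω := lt_of_lt_of_le hlt (min_le_left _ _)
    have hsτ : s < τ1 ω := lt_of_lt_of_le hlt (min_le_right _ _)
    have hnc := hσmin ω s hsσ
    have hYV : ¬ Y s ω ≤ V s ω := fun hvy => hnc ⟨hts, Or.inl ⟨hsτ, hvy⟩⟩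
    have h := hV s hsT ω
    have hVA : V s ω < max (Y s ω) (Z s ω) :=
      lt_of_lt_of_le (not_le.mp hYV) (le_max_left _ _)
    rcases min_cases (max (Y s ω) (Z s ω))
      (max (min (X s ω) (Z s ω)) ((μ[V (s + 1) | ℱ s]) ω)) with ⟨heq, -⟩ | ⟨heq, -⟩
    · rw [h] at hVA ⊢
      exact absurd (heq ▸ hVA) (lt_irrefl _)
    · rw [h, heq]
      exact le_max_right _ _
  have hcmp : ∀ ω, payoffD X Y Z τ1 σ1 ω ≤ V (min (σ1 ω) (τ1 ω)) ω := by
    intro ω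
    rcases lt_trichotomy (σ1 ω) (τ1 ω) with h | h | h
    · have hρ : min (σ1 ω) (τ1 ω) = σ1 ω := min_eq_left h.le
      have hp : payoffD X Y Z τ1 σ1 ω = Y (σ1 ω) ω := by
        simp only [payoffD, if_neg (lt_asymm h), if_pos h]
      rw [hρ, hp]
      rcases (hσspec ω).2 with ⟨-, hvy⟩ | ⟨h1, -⟩ | h1
      · exact hvy
      · exact absurd h1 h.ne
      · exact absurd h1 (lt_asymm h)
    · have hρ : min (σ1 ω) (τ1 ω) = τ1 ω := by rw [h, min_self]
      have hp : payoffD X Y Z τ1 σ1 ω = Z (σ1 ω) ω := by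
        simp [payoffD, h]
      rw [hρ, hp]
      rcases (hσspec ω).2 with ⟨h1, -⟩ | ⟨h1, hvz⟩ | h1
      · exact absurd h1 (by omega)
      · rw [h]; exact h1 ▸ hvz
      · exact absurd h1 (by omega)
    · have hρ : min (σ1 ω) (τ1 ω) = τ1 ω := min_eq_right h.le
      have hp : payoffD X Y Z τ1 σ1 ω = X (τ1 ω) ω := if_pos h
      rw [hρ, hp]
      have hτT' : τ1 ω < T := lt_of_lt_of_le h (hσT ω)
      have hnc := hσmin ω (τ1 ω) h
      have hZV : ¬ Z (τ1 ω) ω ≤ V (τ1 ω) ω := fun hvz =>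
        hnc ⟨(hτmem ω).1, Or.inr (Or.inl ⟨rfl, hvz⟩)⟩
      have h2 : min (X (τ1 ω) ω) (Z (τ1 ω) ω) ≤ V (τ1 ω) ω := by
        rw [hV _ hτT' ω]
        exact le_min ((min_le_right _ _).trans (le_max_right _ _)) (le_max_left _ _)
      rcases min_cases (X (τ1 ω) ω) (Z (τ1 ω) ω) with ⟨heq, -⟩ | ⟨heq, -⟩
      · exact heq ▸ h2
      · exact absurd (heq ▸ h2) hZV
  have hkey := stmt8_key' hVm hVi ht hρst hρt hρT hsup
  have hmeasV : Measurable (fun ω => V (min (σ1 ω) (τ1 ω)) ω) :=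
    stmt8_measurable_eval (fun s hs => ((hVm s hs).measurable).mono (ℱ.le s) le_rfl)
      ((stmt8_st_meas hσst).min (stmt8_st_meas hτst)) hρT
  have hintV : Integrable (fun ω => V (min (σ1 ω) (τ1 ω)) ω) μ :=
    stmt8_integrable_eval hVi hmeasV.aestronglyMeasurable hρT
  have hintP : Integrable (payoffD X Y Z τ1 σ1) μ :=
    stmt8_payoff_integrable (fun s _ => (hXa s).mono (ℱ.le s) le_rfl)
      (fun s _ => (hYa s).mono (ℱ.le s) le_rfl)
      (fun s _ => (hZa s).mono (ℱ.le s) le_rfl)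
      hXi hYi hZi (stmt8_st_meas hτst) (stmt8_st_meas hσst)
      (fun ω => (hτmem ω).2) hσT
  exact ⟨σ1, hσst, fun ω => ⟨hσt ω, hσT ω⟩,
    (condExp_mono hintP hintV (ae_of_all μ hcmp)).trans hkey⟩

end Stmt8Aux

/-- Let `V` be the backward-induction value process of the standard Dynkin game
`SDG(L,U,Z)` with `L = X ∧ Z`, `U = Y ∨ Z`.  For each `t`, `V_t` lies between the
minimax and the maximin of the general game `GDG_t(X,Y,Z)`; consequently, if the
general game has a value, that value equals `V_t`. -/
theorem stmt8 {Ω : Type*} {m0 : MeasurableSpace Ω} (μ : Measure Ω) [IsProbabilityMeasure μ]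
    (ℱ : Filtration ℕ m0) (T : ℕ)
    (X Y Z V : ℕ → Ω → ℝ)
    (hXa : Adapted ℱ X) (hYa : Adapted ℱ Y) (hZa : Adapted ℱ Z)
    (hXi : ∀ s, Integrable (X s) μ) (hYi : ∀ s, Integrable (Y s) μ)
    (hZi : ∀ s, Integrable (Z s) μ)
    (htermX : ∀ ω, X T ω = Z T ω) (htermY : ∀ ω, Y T ω = Z T ω)
    (hVT : ∀ ω, V T ω = Z T ω)
    (hV : ∀ t, t < T → ∀ ω, V t ω =
      min (max (Y t ω) (Z t ω))
        (max (min (X t ω) (Z t ω)) ((μ[V (t + 1) | ℱ t]) ω))) :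
    ∀ t, t ≤ T →
      -- the minimax dominates `V_t`:
      (∀ (S : {σ : Ω → ℕ // IsStoppingTime ℱ (fun ω => (σ ω : WithTop ℕ)) ∧ ∀ ω, σ ω ∈ Set.Icc t T} → Ω → ℝ)
          (m : Ω → ℝ),
        (∀ σ, IsEssSupFam μ
          (fun τ : {τ : Ω → ℕ // IsStoppingTime ℱ (fun ω => (τ ω : WithTop ℕ)) ∧ ∀ ω, τ ω ∈ Set.Icc t T} =>
            μ[payoffD X Y Z τ.1 σ.1 | ℱ t]) (S σ)) →
        IsEssInfFam μ S m → V t ≤ᵐ[μ] m) ∧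
      -- `V_t` dominates the maximin:
      (∀ (I : {τ : Ω → ℕ // IsStoppingTime ℱ (fun ω => (τ ω : WithTop ℕ)) ∧ ∀ ω, τ ω ∈ Set.Icc t T} → Ω → ℝ)
          (m : Ω → ℝ),
        (∀ τ, IsEssInfFam μ
          (fun σ : {σ : Ω → ℕ // IsStoppingTime ℱ (fun ω => (σ ω : WithTop ℕ)) ∧ ∀ ω, σ ω ∈ Set.Icc t T} =>
            μ[payoffD X Y Z τ.1 σ.1 | ℱ t]) (I τ)) →
        IsEssSupFam μ I m → m ≤ᵐ[μ] V t) ∧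
      -- if the general game has a value, it equals `V_t`:
      (∀ (S I : {ρ : Ω → ℕ // IsStoppingTime ℱ (fun ω => (ρ ω : WithTop ℕ)) ∧ ∀ ω, ρ ω ∈ Set.Icc t T} → Ω → ℝ)
          (v : Ω → ℝ),
        (∀ σ, IsEssSupFam μ
          (fun τ : {τ : Ω → ℕ // IsStoppingTime ℱ (fun ω => (τ ω : WithTop ℕ)) ∧ ∀ ω, τ ω ∈ Set.Icc t T} =>
            μ[payoffD X Y Z τ.1 σ.1 | ℱ t]) (S σ)) →
        (∀ τ, IsEssInfFam μ
          (fun σ : {σ : Ω → ℕ // IsStoppingTime ℱ (fun ω => (σ ω : WithTop ℕ)) ∧ ∀ ω, σ ω ∈ Set.Icc t T} =>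
            μ[payoffD X Y Z τ.1 σ.1 | ℱ t]) (I τ)) →
        IsEssInfFam μ S v → IsEssSupFam μ I v → v =ᵐ[μ] V t) := by
  intro t ht
  have hVmi : ∀ s, s ≤ T → StronglyMeasurable[ℱ s] (V s) ∧ Integrable (V s) μ := by
    intro s hs
    rcases eq_or_lt_of_le hs with hsT | hsT
    · subst hsT
      constructor
      · have hfun : V s = Z s := funext hVT
        rw [hfun]; exact (hZa s).stronglyMeasurable
      · exact (hZi s).congr (ae_of_all μ fun ω => (hVT ω).symm)
    · have hfun : V s = (Y s ⊔ Z s) ⊓ ((X s ⊓ Z s) ⊔ μ[V (s + 1) | ℱ s]) := by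
        funext ω
        rw [hV s hsT ω]
        simp [Pi.inf_apply, Pi.sup_apply]
      constructor
      · rw [hfun]
        exact stmt8_sm_inf (stmt8_sm_sup (hYa s).stronglyMeasurable (hZa s).stronglyMeasurable)
          (stmt8_sm_sup (stmt8_sm_inf (hXa s).stronglyMeasurable (hZa s).stronglyMeasurable) stronglyMeasurable_condExp)
      · rw [hfun]
        exact ((hYi s).sup (hZi s)).inf (((hXi s).inf (hZi s)).sup integrable_condExp)
  have hVm : ∀ s, s ≤ T → StronglyMeasurable[ℱ s] (V s) := fun s hs => (hVmi s hs).1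
  have hVi : ∀ s, s ≤ T → Integrable (V s) μ := fun s hs => (hVmi s hs).2
  have keyA : ∀ (S : {σ : Ω → ℕ // IsStoppingTime ℱ (fun ω => (σ ω : WithTop ℕ)) ∧ ∀ ω, σ ω ∈ Set.Icc t T} → Ω → ℝ)
      (m : Ω → ℝ),
      (∀ σ, IsEssSupFam μ
        (fun τ : {τ : Ω → ℕ // IsStoppingTime ℱ (fun ω => (τ ω : WithTop ℕ)) ∧ ∀ ω, τ ω ∈ Set.Icc t T} =>
          μ[payoffD X Y Z τ.1 σ.1 | ℱ t]) (S σ)) →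
      IsEssInfFam μ S m → V t ≤ᵐ[μ] m := by
    intro S m hS hm
    refine hm.2 (V t) fun σ => ?_
    obtain ⟨τ0, hst, hmem, hle⟩ := stmt8_partA hXa hYa hZa hXi hYi hZi hVT hV hVm hVi ht
      σ.2.1 σ.2.2
    exact hle.trans ((hS σ).1 ⟨τ0, hst, hmem⟩)
  have keyB : ∀ (I : {τ : Ω → ℕ // IsStoppingTime ℱ (fun ω => (τ ω : WithTop ℕ)) ∧ ∀ ω, τ ω ∈ Set.Icc t T} → Ω → ℝ)
      (m : Ω → ℝ),
      (∀ τ, IsEssInfFam μ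
        (fun σ : {σ : Ω → ℕ // IsStoppingTime ℱ (fun ω => (σ ω : WithTop ℕ)) ∧ ∀ ω, σ ω ∈ Set.Icc t T} =>
          μ[payoffD X Y Z τ.1 σ.1 | ℱ t]) (I τ)) →
      IsEssSupFam μ I m → m ≤ᵐ[μ] V t := by
    intro I m hI hm
    refine hm.2 (V t) fun τ => ?_
    obtain ⟨σ1, hst, hmem, hle⟩ := stmt8_partB hXa hYa hZa hXi hYi hZi hVT hV hVm hVi ht
      τ.2.1 τ.2.2
    exact ((hI τ).1 ⟨σ1, hst, hmem⟩).trans hle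
  exact ⟨keyA, keyB, fun S I v hS hI hvS hvI =>
    (keyB I v hI hvI).antisymm (keyA S v hS hvS)⟩
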